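/- Suppose Γ is a discrete subgroup of PSL(2,ℝ) × G containing a semi-parabolic element γ = (f u f⁻¹, g) with u ∈ U − {Id}. Then for any g' ∈ G, the D⁺-semi-orbit of the point x = Γ(f,g') in X = Γ\(PSL(2,ℝ) × G) is divergent: no sequence x·d_n with d_n = diag(λ_n, λ_n⁻¹), λ_n → +∞, converges in X. -/

import Mathlib

open Filter Topology
open scoped MatrixGroups

instance : TopologicalSpace SL(2, ℝ) := instTopologicalSpaceSubtype

/-- The upper unipotent matrix `[[1,t],[0,1]]` in `SL(2,ℝ)`. -/
def uni (t : ℝ) : SL(2, ℝ) := ⟨!![1, t; 0, 1], by simp [Matrix.det_fin_two_of]⟩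

/-- The diagonal matrix `diag(l, l⁻¹)` in `SL(2,ℝ)`, for `l ≠ 0`. -/
noncomputable def dmat (l : ℝ) (hl : l ≠ 0) : SL(2, ℝ) :=
  ⟨!![l, 0; 0, l⁻¹], by simp [Matrix.det_fin_two_of, mul_inv_cancel₀ hl]⟩

section Aux

lemma continuous_uni : Continuous uni := by
  apply continuous_induced_rng.mpr
  show Continuous fun s : ℝ => (!![1, s; 0, 1] : Matrix (Fin 2) (Fin 2) ℝ)
  refine continuous_matrix fun i j => ?_
  fin_cases i <;> fin_cases j <;> simp <;>
    first
      | exact continuous_const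
      | exact continuous_id

instance : T2Space SL(2, ℝ) :=
  Topology.IsEmbedding.t2Space ⟨⟨rfl⟩, Subtype.coe_injective⟩

instance : IsTopologicalGroup SL(2, ℝ) where
  continuous_mul := by
    apply continuous_induced_rng.mpr
    show Continuous fun p : SL(2, ℝ) × SL(2, ℝ) =>
      ((p.1 : Matrix (Fin 2) (Fin 2) ℝ) * (p.2 : Matrix (Fin 2) (Fin 2) ℝ))
    exact (continuous_subtype_val.comp continuous_fst).matrix_mul
      (continuous_subtype_val.comp continuous_snd)
  continuous_inv := by
    apply continuous_induced_rng.mpr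
    show Continuous fun A : SL(2, ℝ) => ((A⁻¹ : SL(2, ℝ)) : Matrix (Fin 2) (Fin 2) ℝ)
    simp only [Matrix.SpecialLinearGroup.coe_inv]
    exact continuous_subtype_val.matrix_adjugate

lemma uni_mul_dmat (s l : ℝ) (hl : l ≠ 0) :
    uni s * dmat l hl = dmat l hl * uni (s * (l⁻¹ * l⁻¹)) := by
  apply Subtype.ext
  show (!![1, s; 0, 1] : Matrix (Fin 2) (Fin 2) ℝ) * !![l, 0; 0, l⁻¹]
      = !![l, 0; 0, l⁻¹] * !![1, s * (l⁻¹ * l⁻¹); 0, 1]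
  rw [Matrix.mul_fin_two, Matrix.mul_fin_two]
  ext i j
  fin_cases i <;> fin_cases j <;>
    simp [Matrix.cons_val_zero, Matrix.cons_val_one, Matrix.head_cons] <;>
    field_simp <;> ring

lemma uni_ne_one {s : ℝ} (hs : s ≠ 0) : uni s ≠ 1 := by
  intro h
  have := congrArg (fun A : SL(2, ℝ) => (A : Matrix (Fin 2) (Fin 2) ℝ) 0 1) h
  simp [uni, Matrix.one_apply] at this
  exact hs this

end Aux

set_option maxHeartbeats 1000000

/-- If a discrete subgroup `Γ` of `PSL(2,ℝ) × G` contains a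
semi-parabolic element `γ = (f·u·f⁻¹, g)` with `u ∈ U − {Id}`, then for any `g' ∈ G` the
`D⁺`-semi-orbit of `x = Γ(f,g')` in `X = Γ\(PSL(2,ℝ) × G)` is divergent: no sequence
`x·d_n`, with `d_n = diag(λ_n, λ_n⁻¹)` and `λ_n → +∞`, converges in `X`. -/
theorem stmt_12 (G : Type*) [Group G] [TopologicalSpace G] [IsTopologicalGroup G]
    (Γ : Subgroup (SL(2, ℝ) × G)) (hdisc : DiscreteTopology Γ)
    (f : SL(2, ℝ)) (g : G) (t : ℝ) (ht : t ≠ 0) (hmem : (f * uni t * f⁻¹, g) ∈ Γ)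
    (g' : G) (lam : ℕ → ℝ) (hgt : ∀ n, 1 < lam n) (hlam : Tendsto lam atTop atTop) :
    ¬ ∃ y : Quotient (MulAction.orbitRel Γ (SL(2, ℝ) × G)),
      Tendsto (fun n => Quotient.mk (MulAction.orbitRel Γ (SL(2, ℝ) × G))
          ((f, g') * (dmat (lam n) ((zero_lt_one.trans (hgt n)).ne'), 1)))
        atTop (𝓝 y) := by
  rintro ⟨y, hy⟩
  obtain ⟨h, hrep⟩ := Quotient.exists_rep y
  subst hrep
  set γ₀ : (SL(2, ℝ) × G) := (f * uni t * f⁻¹, g) with hγ₀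
  set g₀ : G := g'⁻¹ * g * g' with hg₀
  set Z : ℕ → (SL(2, ℝ) × G) := fun n => (f, g') * (dmat (lam n) ((zero_lt_one.trans (hgt n)).ne'), 1)
    with hZ
  set s : ℕ → ℝ := fun n => t * ((lam n)⁻¹ * (lam n)⁻¹) with hs
  have hlamne : ∀ n, lam n ≠ 0 := fun n => (zero_lt_one.trans (hgt n)).ne'
  have hsne : ∀ n, s n ≠ 0 := fun n =>
    mul_ne_zero ht (mul_ne_zero (inv_ne_zero (hlamne n)) (inv_ne_zero (hlamne n)))
  have hs0 : Tendsto s atTop (𝓝 0) := by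
    have hinv : Tendsto (fun n => (lam n)⁻¹) atTop (𝓝 0) := hlam.inv_tendsto_atTop
    have := (hinv.mul hinv).const_mul t
    simpa using this
  -- key algebraic identity
  have key : ∀ n, γ₀ * Z n = Z n * (uni (s n), g₀) := by
    intro n
    have h1 : uni t * dmat (lam n) (hlamne n) = dmat (lam n) (hlamne n) * uni (s n) :=
      uni_mul_dmat t (lam n) (hlamne n)
    rw [Prod.ext_iff]
    simp only [hZ, hγ₀, hg₀, Prod.fst_mul, Prod.snd_mul]
    constructor
    · show f * uni t * f⁻¹ * (f * dmat (lam n) ((zero_lt_one.trans (hgt n)).ne')) =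
        f * dmat (lam n) ((zero_lt_one.trans (hgt n)).ne') * uni (s n)
      calc f * uni t * f⁻¹ * (f * dmat (lam n) ((zero_lt_one.trans (hgt n)).ne'))
          = f * (uni t * dmat (lam n) (hlamne n)) := by group
        _ = f * (dmat (lam n) (hlamne n) * uni (s n)) := by rw [h1]
        _ = f * dmat (lam n) ((zero_lt_one.trans (hgt n)).ne') * uni (s n) := by group
    · show g * (g' * 1) = g' * 1 * (g'⁻¹ * g * g')
      group
  -- discreteness: a neighborhood of 1 meeting Γ only at 1
  obtain ⟨W₀, hW₀open, hW₀mem, hW₀⟩ :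
      ∃ W₀ : Set (SL(2, ℝ) × G), IsOpen W₀ ∧ (1 : (SL(2, ℝ) × G)) ∈ W₀ ∧ ∀ x ∈ Γ, x ∈ W₀ → x = 1 := by
    have hopen : IsOpen ({1} : Set Γ) := isOpen_discrete _
    rw [isOpen_induced_iff] at hopen
    obtain ⟨W₀, hW₀, hpre⟩ := hopen
    refine ⟨W₀, hW₀, ?_, ?_⟩
    · have : (1 : Γ) ∈ (Subtype.val ⁻¹' W₀ : Set Γ) := by rw [hpre]; rfl
      exact this
    · intro x hxΓ hxW
      have : (⟨x, hxΓ⟩ : Γ) ∈ (Subtype.val ⁻¹' W₀ : Set Γ) := hxW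
      rw [hpre] at this
      exact congrArg Subtype.val this
  -- V with V⁻¹ * V ⊆ W₀
  obtain ⟨V, hVopen, hVmem, hV⟩ :
      ∃ V : Set (SL(2, ℝ) × G), IsOpen V ∧ (1 : (SL(2, ℝ) × G)) ∈ V ∧ ∀ a ∈ V, ∀ b ∈ V, a⁻¹ * b ∈ W₀ := by
    have hc : Continuous fun p : (SL(2, ℝ) × G) × (SL(2, ℝ) × G) => p.1⁻¹ * p.2 := continuous_fst.inv.mul continuous_snd
    have hm : (fun p : (SL(2, ℝ) × G) × (SL(2, ℝ) × G) => p.1⁻¹ * p.2) ⁻¹' W₀ ∈ 𝓝 ((1 : (SL(2, ℝ) × G)), (1 : (SL(2, ℝ) × G))) := by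
      apply hc.continuousAt.preimage_mem_nhds
      simpa using hW₀open.mem_nhds hW₀mem
    rw [mem_nhds_prod_iff] at hm
    obtain ⟨A, hA, B, hB, hAB⟩ := hm
    obtain ⟨V, hVsub, hVopen, hVmem⟩ := mem_nhds_iff.mp (Filter.inter_mem hA hB)
    refine ⟨V, hVopen, hVmem, fun a ha b hb => ?_⟩
    have h9 := hAB (Set.mk_mem_prod (hVsub ha).1 (hVsub hb).2)
    exact h9
  -- the conjugation map
  set Φ : (SL(2, ℝ) × G) × ℝ → (SL(2, ℝ) × G) := fun p => p.1 * (uni p.2, g₀) * p.1⁻¹ with hΦ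
  have hΦc : Continuous Φ := by
    apply (continuous_fst.mul ?_).mul continuous_fst.inv
    exact (continuous_uni.comp continuous_snd).prodMk continuous_const
  have huni0 : uni 0 = 1 := by
    apply Subtype.ext
    show (!![1, 0; 0, 1] : Matrix (Fin 2) (Fin 2) ℝ) = 1
    rw [Matrix.one_fin_two]
  set δs : (SL(2, ℝ) × G) := ((1 : SL(2, ℝ)), h.2 * g₀ * h.2⁻¹) with hδs
  have hΦh : Φ (h, 0) = δs := by
    show h * (uni 0, g₀) * h⁻¹ = δs
    rw [huni0, hδs, Prod.ext_iff]
    constructor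
    · simp
    · simp
  -- Claim A
  have claimA : ∀ N ∈ 𝓝 δs, ∃ β : (SL(2, ℝ) × G), β ∈ Γ ∧ δs⁻¹ * β ∈ V ∧ β ∈ N ∧ β.1 ≠ 1 := by
    intro N hN
    have hN' : N ∩ (fun x : (SL(2, ℝ) × G) => δs⁻¹ * x) ⁻¹' V ∈ 𝓝 δs := by
      refine Filter.inter_mem hN ?_
      refine ((hVopen.preimage (continuous_const.mul continuous_id)).mem_nhds ?_)
      simpa using hVmem
    have hpre : Φ ⁻¹' (N ∩ (fun x : (SL(2, ℝ) × G) => δs⁻¹ * x) ⁻¹' V) ∈ 𝓝 ((h, 0) : (SL(2, ℝ) × G) × ℝ) := by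
      apply hΦc.continuousAt.preimage_mem_nhds
      rw [hΦh]; exact hN'
    rw [mem_nhds_prod_iff] at hpre
    obtain ⟨U, hU, T, hT, hUT⟩ := hpre
    obtain ⟨U', hU'sub, hU'open, hU'mem⟩ := mem_nhds_iff.mp hU
    -- the saturated open set
    set Tsat : Set (SL(2, ℝ) × G) := {z : (SL(2, ℝ) × G) | ∃ γ : Γ, (γ : (SL(2, ℝ) × G)) * z ∈ U'} with hTsat
    have hsatopen : IsOpen Tsat := by
      have : Tsat = ⋃ γ : Γ, (fun z : (SL(2, ℝ) × G) => (γ : (SL(2, ℝ) × G)) * z) ⁻¹' U' := by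
        ext z; simp [hTsat, Set.mem_iUnion]
      rw [this]
      exact isOpen_iUnion fun γ => hU'open.preimage (continuous_const.mul continuous_id)
    have hsat_sat : Quotient.mk (MulAction.orbitRel Γ (SL(2, ℝ) × G)) ⁻¹' (Quotient.mk (MulAction.orbitRel Γ (SL(2, ℝ) × G)) '' Tsat) = Tsat := by
      ext z
      simp only [Set.mem_preimage, Set.mem_image]
      constructor
      · rintro ⟨w, ⟨γ1, hw⟩, hmk⟩
        have hrel : w ∈ MulAction.orbit Γ z := by
          rw [← MulAction.orbitRel_apply (G := Γ)]
          exact Quotient.exact hmk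
        obtain ⟨γ2, hγ2⟩ := hrel
        refine ⟨γ1 * γ2, ?_⟩
        have : (γ2 : (SL(2, ℝ) × G)) * z = w := hγ2
        push_cast
        rw [mul_assoc, this]
        exact hw
      · intro hz
        exact ⟨z, hz, rfl⟩
    have hopenQ : IsOpen (Quotient.mk (MulAction.orbitRel Γ (SL(2, ℝ) × G)) '' Tsat) := by
      rw [show (instTopologicalSpaceQuotient :
          TopologicalSpace (Quotient (MulAction.orbitRel Γ (SL(2, ℝ) × G)))) =
          TopologicalSpace.coinduced (Quotient.mk (MulAction.orbitRel Γ (SL(2, ℝ) × G)))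
            instTopologicalSpaceProd from rfl, isOpen_coinduced, hsat_sat]
      exact hsatopen
    have hhT : h ∈ Tsat := ⟨1, by simpa using hU'mem⟩
    have hmemQ : Quotient.mk (MulAction.orbitRel Γ (SL(2, ℝ) × G)) '' Tsat ∈ 𝓝 (Quotient.mk (MulAction.orbitRel Γ (SL(2, ℝ) × G)) h) :=
      hopenQ.mem_nhds ⟨h, hhT, rfl⟩
    have hev1 : ∀ᶠ n in atTop, Quotient.mk (MulAction.orbitRel Γ (SL(2, ℝ) × G)) (Z n) ∈ Quotient.mk (MulAction.orbitRel Γ (SL(2, ℝ) × G)) '' Tsat := hy hmemQ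
    have hev2 : ∀ᶠ n in atTop, s n ∈ T := hs0 hT
    obtain ⟨n, hn1, hn2⟩ := (hev1.and hev2).exists
    obtain ⟨w, hwT, hwmk⟩ := hn1
    -- transfer: ∃ γ : Γ, γ * Z n ∈ U'
    have : Z n ∈ Tsat := by
      rw [← hsat_sat]
      exact ⟨w, hwT, hwmk⟩
    obtain ⟨γ, hγU⟩ := this
    set c : (SL(2, ℝ) × G) := (γ : (SL(2, ℝ) × G)) * Z n with hc
    have hβΦ : Φ (c, s n) = (γ : (SL(2, ℝ) × G)) * γ₀ * (γ : (SL(2, ℝ) × G))⁻¹ := by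
      have h2 : γ₀ = Z n * (uni (s n), g₀) * (Z n)⁻¹ := by
        rw [← key n]; group
      show c * (uni (s n), g₀) * c⁻¹ = (γ : (SL(2, ℝ) × G)) * γ₀ * (γ : (SL(2, ℝ) × G))⁻¹
      rw [h2, hc]
      group
    have hmemΦ : Φ (c, s n) ∈ N ∩ (fun x : (SL(2, ℝ) × G) => δs⁻¹ * x) ⁻¹' V := by
      apply hUT
      exact ⟨hU'sub hγU, hn2⟩
    refine ⟨Φ (c, s n), ?_, hmemΦ.2, hmemΦ.1, ?_⟩
    · rw [hβΦ]
      exact Γ.mul_mem (Γ.mul_mem γ.2 hmem) (Γ.inv_mem γ.2)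
    · have hfst : (Φ (c, s n)).1 = c.1 * uni (s n) * c.1⁻¹ := by
        simp [hΦ]
      rw [hfst]
      intro hcontra
      apply uni_ne_one (hsne n)
      have h3 : c.1 * uni (s n) = c.1 := by
        rw [mul_inv_eq_iff_eq_mul, one_mul] at hcontra
        exact hcontra
      exact mul_eq_left.mp h3
  -- conclusion
  obtain ⟨β₀, hβ₀Γ, hβ₀V, -, hβ₀ne⟩ := claimA Set.univ Filter.univ_mem
  have huniq : ∀ N ∈ 𝓝 δs, β₀ ∈ N := by
    intro N hN
    obtain ⟨β, hβΓ, hβV, hβN, -⟩ := claimA N hN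
    have h1 : β₀⁻¹ * β ∈ W₀ := by
      have h2 := hV _ hβ₀V _ hβV
      have h3 : (δs⁻¹ * β₀)⁻¹ * (δs⁻¹ * β) = β₀⁻¹ * β := by group
      rwa [h3] at h2
    have h4 : β₀⁻¹ * β = 1 := hW₀ _ (Γ.mul_mem (Γ.inv_mem hβ₀Γ) hβΓ) h1
    have h5 : β₀ = β := inv_mul_eq_one.mp h4
    rw [h5]; exact hβN
  have hfst1 : β₀.1 = 1 := by
    by_contra hne
    have hop : IsOpen {p : (SL(2, ℝ) × G) | p.1 ≠ β₀.1} := isOpen_ne.preimage continuous_fst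
    have hmemδ : δs ∈ {p : (SL(2, ℝ) × G) | p.1 ≠ β₀.1} := by
      simp only [Set.mem_setOf_eq, hδs]
      exact fun hh => hne hh.symm
    exact (huniq _ (hop.mem_nhds hmemδ)) rfl
  exact hβ₀ne hfst1
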